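/- Let V : ℝ → ℝ be twice continuously differentiable, strictly increasing, strictly concave with -V'' ≥ ℓ > 0 on a relevant interval, let f be a bounded random variable with |f| ≤ C_f satisfying ℙ[f ≥ α] ≥ α and ℙ[f ≤ -α] ≥ α for some α ∈ (0,1]. Then for every x, h: the function γ(h) := E[V'(x + h f) f] satisfies |γ'(h)| = |E[V''(x + h f) f²]| ≥ α³ · inf_{y ∈ D} ℓ_V(y), where D is any interval containing all values x + h f and ℓ_V is a continuous positive lower bound for -V''. -/

import Mathlib

open MeasureTheory

/-- Under the uniform no-arbitrage condition, the second derivative (in `h`) of the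
one-step expected utility is bounded away from zero:
`|E[V''(x + hf) f²]| ≥ α³ · inf_D ℓ_V`. -/
theorem second_derivative_lower_bound
    {Ω : Type*} {mΩ : MeasurableSpace Ω} (μ : Measure Ω) [IsProbabilityMeasure μ]
    (f : Ω → ℝ) (hf : Measurable f) (Cf : ℝ) (hCf : 0 < Cf) (hfb : ∀ ω, |f ω| ≤ Cf)
    (α : ℝ) (hα0 : 0 < α) (hα1 : α ≤ 1)
    (hup : ENNReal.ofReal α ≤ μ {ω | α ≤ f ω})
    (hdown : ENNReal.ofReal α ≤ μ {ω | f ω ≤ -α})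
    (V : ℝ → ℝ) (hV : ContDiff ℝ 2 V) (hVmono : StrictMono V)
    (hVconc : StrictConcaveOn ℝ Set.univ V)
    (ℓV : ℝ → ℝ) (hℓcont : Continuous ℓV) (hℓpos : ∀ y, 0 < ℓV y)
    (hℓle : ∀ y, ℓV y ≤ -(deriv (deriv V) y))
    (x h : ℝ) (D : Set ℝ) (hD : ∀ ω, x + h * f ω ∈ D) :
    α ^ 3 * (⨅ y : D, ℓV y) ≤ |∫ ω, deriv (deriv V) (x + h * f ω) * (f ω) ^ 2 ∂μ| := by
  -- abbreviations
  have hΩ : Nonempty Ω := by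
    by_contra h'
    rw [not_nonempty_iff] at h'
    have h0 : μ Set.univ = 0 := by
      rw [Set.univ_eq_empty_iff.mpr h']; exact measure_empty
    rw [measure_univ] at h0; exact one_ne_zero h0
  haveI : Nonempty D := ⟨⟨x + h * f (Classical.arbitrary Ω), hD _⟩⟩
  set g : Ω → ℝ := fun ω => deriv (deriv V) (x + h * f ω) * (f ω) ^ 2 with hg
  set c : ℝ := ⨅ y : D, ℓV y with hc
  -- c is well behaved
  have hbdd : BddBelow (Set.range fun y : D => ℓV y) :=
    ⟨0, by rintro _ ⟨y, rfl⟩; exact (hℓpos y).le⟩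
  have hc0 : 0 ≤ c := le_ciInf fun y => (hℓpos y).le
  have hcle : ∀ ω, c ≤ ℓV (x + h * f ω) := fun ω =>
    ciInf_le hbdd (⟨x + h * f ω, hD ω⟩ : D)
  -- continuity of V''
  have hV'' : Continuous (deriv (deriv V)) := by
    have h1 : ContDiff ℝ 1 (deriv V) := by
      have := (contDiff_succ_iff_deriv (n := 1)).mp (by norm_num at hV ⊢; exact hV)
      exact this.2.2
    exact h1.continuous_deriv le_rfl
  -- boundedness of V'' on the relevant compact set
  obtain ⟨M, hM⟩ : ∃ M, ∀ y ∈ Set.Icc (x - |h| * Cf) (x + |h| * Cf),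
      ‖deriv (deriv V) y‖ ≤ M :=
    (isCompact_Icc).exists_bound_of_continuousOn hV''.continuousOn
  have hmem : ∀ ω, x + h * f ω ∈ Set.Icc (x - |h| * Cf) (x + |h| * Cf) := by
    intro ω
    have : |h * f ω| ≤ |h| * Cf := by
      rw [abs_mul]
      exact mul_le_mul_of_nonneg_left (hfb ω) (abs_nonneg h)
    constructor <;> cases' abs_le.mp this with h1 h2 <;> linarith
  -- integrability
  have hgm : Measurable g :=
    (hV''.measurable.comp (measurable_const.add (measurable_const.mul hf))).mul
      (hf.pow measurable_const)
  have hgi : Integrable g μ := by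
    refine ⟨hgm.aestronglyMeasurable, ?_⟩
    refine HasFiniteIntegral.of_bounded (C := M * Cf ^ 2) (Filter.Eventually.of_forall ?_)
    intro ω
    have h1 : ‖deriv (deriv V) (x + h * f ω)‖ ≤ M := hM _ (hmem ω)
    have h2 : ‖(f ω) ^ 2‖ ≤ Cf ^ 2 := by
      rw [Real.norm_eq_abs, abs_pow]
      exact pow_le_pow_left₀ (abs_nonneg _) (hfb ω) 2
    calc ‖g ω‖ = ‖deriv (deriv V) (x + h * f ω)‖ * ‖(f ω) ^ 2‖ := norm_mul _ _
      _ ≤ M * Cf ^ 2 := mul_le_mul h1 h2 (norm_nonneg _)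
          (le_trans (norm_nonneg _) h1)
  have hf2i : Integrable (fun ω => (f ω) ^ 2) μ := by
    refine ⟨(hf.pow measurable_const).aestronglyMeasurable, ?_⟩
    refine HasFiniteIntegral.of_bounded (C := Cf ^ 2) (Filter.Eventually.of_forall ?_)
    intro ω
    rw [Real.norm_eq_abs, abs_pow]
    exact pow_le_pow_left₀ (abs_nonneg _) (hfb ω) 2
  -- pointwise bound g ≤ -c * f²
  have hptw : ∀ ω, g ω ≤ -c * (f ω) ^ 2 := by
    intro ω
    have h1 : deriv (deriv V) (x + h * f ω) ≤ -c := by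
      have := hℓle (x + h * f ω)
      have := hcle ω
      linarith
    exact mul_le_mul_of_nonneg_right h1 (sq_nonneg _)
  -- integral bound: ∫ g ≤ -c * ∫ f²
  have hI1 : ∫ ω, g ω ∂μ ≤ -c * ∫ ω, (f ω) ^ 2 ∂μ := by
    rw [← integral_const_mul]
    exact integral_mono hgi (hf2i.const_mul _) hptw
  -- lower bound for ∫ f²
  have hs : MeasurableSet {ω | α ≤ f ω} := measurableSet_le measurable_const hf
  have hμs : α ≤ (μ {ω | α ≤ f ω}).toReal := by
    have := ENNReal.toReal_mono (measure_ne_top μ _) hup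
    rwa [ENNReal.toReal_ofReal hα0.le] at this
  have hI2 : α ^ 3 ≤ ∫ ω, (f ω) ^ 2 ∂μ := by
    have hset : α ^ 2 * (μ {ω | α ≤ f ω}).toReal ≤ ∫ ω in {ω | α ≤ f ω}, (f ω) ^ 2 ∂μ := by
      refine setIntegral_ge_of_const_le_real hs (measure_ne_top μ _) ?_ (hf2i.integrableOn)
      intro ω hω
      exact pow_le_pow_left₀ hα0.le hω 2
    have hle : ∫ ω in {ω | α ≤ f ω}, (f ω) ^ 2 ∂μ ≤ ∫ ω, (f ω) ^ 2 ∂μ :=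
      setIntegral_le_integral hf2i (Filter.Eventually.of_forall fun ω => sq_nonneg _)
    have h3 : α ^ 3 ≤ α ^ 2 * (μ {ω | α ≤ f ω}).toReal := by
      have := mul_le_mul_of_nonneg_left hμs (sq_nonneg α)
      calc α ^ 3 = α ^ 2 * α := by ring
        _ ≤ _ := this
    linarith
  -- combine
  have hfinal : α ^ 3 * c ≤ -(∫ ω, g ω ∂μ) := by
    have h4 : c * α ^ 3 ≤ c * ∫ ω, (f ω) ^ 2 ∂μ :=
      mul_le_mul_of_nonneg_left hI2 hc0
    nlinarith [hI1]
  calc α ^ 3 * c ≤ -(∫ ω, g ω ∂μ) := hfinal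
    _ ≤ |∫ ω, g ω ∂μ| := neg_le_abs _
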